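/- Suppose in round t the proposer i offers an outcome o ∈ L_t^i and the responder j rejects. Then there exists an outcome o' ∈ O_{t+1} with o' ∉ L_t^i such that L_{t+1}^j = (L_t^i \ {o}) ∪ {o'}. -/
import Mathlib


def respSize (m : ℕ) : ℕ := m / 2

def propSize (m : ℕ) : ℕ := if m % 2 = 1 then m / 2 else m / 2 - 1

def IsLowSet {α : Type*} (O : Finset α) (r : α → ℕ) (n : ℕ) (L : Finset α) : Prop :=
  L ⊆ O ∧ L.card = n ∧ ∀ a ∈ L, ∀ b ∈ O, b ∉ L → r a < r b

/-- if the proposer `i` offers `o ∈ L_t^i` and the responder rejects,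
then the new responder's (agent `i`'s) lower set over `O \ {o}` equals
`(L_t^i \ {o}) ∪ {o'}` for some new outcome `o' ∈ O_{t+1}` with `o' ∉ L_t^i`. -/
theorem lower_set_gains_outcome_of_offer_inside_prop {α : Type*} [DecidableEq α]
    (O : Finset α) (r : α → ℕ) (hr : Set.InjOn r O) (o : α)
    (Li L' : Finset α)
    (hLi : IsLowSet O r (propSize O.card) Li)
    (hoLi : o ∈ Li)
    (hL' : IsLowSet (O.erase o) r (respSize (O.card - 1)) L') :
    ∃ o' ∈ O.erase o, o' ∉ Li ∧ L' = (Li.erase o) ∪ {o'} := by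
  have heq : respSize (O.card - 1) = propSize O.card := by
    unfold respSize propSize; split <;> omega
  have hcard' : L'.card = Li.card := by rw [hL'.2.1, heq, hLi.2.1]
  have hLipos : 0 < Li.card := Finset.card_pos.mpr ⟨o, hoLi⟩
  have hcerase : (Li.erase o).card = Li.card - 1 := Finset.card_erase_of_mem hoLi
  have hsub : Li.erase o ⊆ L' := by
    intro a ha
    by_contra haL'
    have haLi : a ∈ Li := (Finset.mem_erase.mp ha).2
    have haO : a ∈ O.erase o :=
      Finset.mem_erase.mpr ⟨(Finset.mem_erase.mp ha).1, hLi.1 haLi⟩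
    have hsub2 : L' ⊆ Li.erase o := by
      intro b hb
      have hbO : b ∈ O.erase o := hL'.1 hb
      by_contra hbL
      have hbLi : b ∉ Li := fun h =>
        hbL (Finset.mem_erase.mpr ⟨(Finset.mem_erase.mp hbO).1, h⟩)
      have h1 := hLi.2.2 a haLi b ((Finset.mem_erase.mp hbO).2) hbLi
      have h2 := hL'.2.2 b hb a haO haL'
      omega
    have := Finset.card_le_card hsub2
    omega
  have hsd : (L' \ Li.erase o).card = 1 := by
    rw [Finset.card_sdiff_of_subset hsub]; omega
  obtain ⟨o', ho'⟩ := Finset.card_eq_one.mp hsd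
  have ho'mem : o' ∈ L' \ Li.erase o := ho' ▸ Finset.mem_singleton_self o'
  have ho'L' : o' ∈ L' := (Finset.mem_sdiff.mp ho'mem).1
  have ho'O : o' ∈ O.erase o := hL'.1 ho'L'
  have ho'ne : o' ≠ o := (Finset.mem_erase.mp ho'O).1
  have ho'Li : o' ∉ Li := fun h =>
    (Finset.mem_sdiff.mp ho'mem).2 (Finset.mem_erase.mpr ⟨ho'ne, h⟩)
  refine ⟨o', ho'O, ho'Li, ?_⟩
  rw [← ho', Finset.union_sdiff_of_subset hsub]
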